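/- arXiv:2210.00931 — 2 statements merged into one kernel-verified Lean document; each statement's English description precedes it below -/
import Mathlib

section
/- For the quadratic functional with integral constraint: among all continuous c : [0, τ] → ℝ^M satisfying ∫₀^τ c(θ) dθ = ψ, the functional J(c) = ∫₀^τ ‖Γ(θ)c(θ) − m̂‖² dθ + μ ∫₀^τ ‖c(θ)‖² dθ is minimized by c*(θ) = Π(θ)⁻¹ (Γ(θ)ᵀ m̂ − λ), where Π(θ) = Γ(θ)ᵀΓ(θ) + μI and λ = (∫₀^τ Π(θ)⁻¹ dθ)⁻¹ (∫₀^τ Π(θ)⁻¹ Γ(θ)ᵀ dθ · m̂ − ψ), provided ∫₀^τ Π(θ)⁻¹ dθ is invertible. -/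
open Set Matrix intervalIntegral

/-- Squared Euclidean norm of a finite real vector. -/
def sqNorm {k : ℕ} (v : Fin k → ℝ) : ℝ := ∑ i, (v i)^2

/-- The functional J₂ of the paper. -/
noncomputable def J2 {N M : ℕ} (τ μ : ℝ) (Γ : ℝ → Matrix (Fin N) (Fin M) ℝ)
    (mhat : Fin N → ℝ) (c : ℝ → Fin M → ℝ) : ℝ :=
  (∫ θ in (0:ℝ)..τ, sqNorm ((Γ θ).mulVec (c θ) - mhat))
    + μ * ∫ θ in (0:ℝ)..τ, sqNorm (c θ)

lemma sqNorm_eq_dot {k : ℕ} (v : Fin k → ℝ) : sqNorm v = v ⬝ᵥ v := by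
  simp [sqNorm, dotProduct, sq]

lemma sqNorm_nonneg' {k : ℕ} (v : Fin k → ℝ) : 0 ≤ sqNorm v :=
  Finset.sum_nonneg fun _ _ => sq_nonneg _

lemma sqNorm_add {k : ℕ} (x y : Fin k → ℝ) :
    sqNorm (x + y) = sqNorm x + 2 * (x ⬝ᵥ y) + sqNorm y := by
  simp only [sqNorm_eq_dot, dotProduct_add, add_dotProduct, dotProduct_comm y x]
  ring

lemma continuous_sqNorm {k : ℕ} : Continuous (sqNorm (k := k)) :=
  continuous_finset_sum _ fun i _ => (continuous_apply i).pow 2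

/-- Pointwise expansion of the quadratic integrand around the critical point. -/
lemma pointwise_key {N M : ℕ} (G : Matrix (Fin N) (Fin M) ℝ) (μ : ℝ)
    (mhat : Fin N → ℝ) (lam cs c : Fin M → ℝ)
    (hc : (Gᵀ * G + μ • (1 : Matrix (Fin M) (Fin M) ℝ)).mulVec cs
        = Gᵀ.mulVec mhat - lam) :
    sqNorm (G.mulVec c - mhat) + μ * sqNorm c
      = (sqNorm (G.mulVec cs - mhat) + μ * sqNorm cs)
        + (sqNorm (G.mulVec (c - cs)) + μ * sqNorm (c - cs))
        - 2 * (lam ⬝ᵥ (c - cs)) := by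
  set h : Fin M → ℝ := c - cs with hh
  have hc' : c = cs + h := by simp [hh]
  have e1 : G.mulVec c - mhat = (G.mulVec cs - mhat) + G.mulVec h := by
    rw [hc', Matrix.mulVec_add]; abel
  have cross : (G.mulVec cs - mhat) ⬝ᵥ G.mulVec h + μ * (cs ⬝ᵥ h) = -(lam ⬝ᵥ h) := by
    have t1 : (G.mulVec cs - mhat) ⬝ᵥ G.mulVec h
        = (Gᵀ.mulVec (G.mulVec cs - mhat)) ⬝ᵥ h := by
      rw [Matrix.dotProduct_mulVec, Matrix.mulVec_transpose]
    have t2 : μ * (cs ⬝ᵥ h) = ((μ • (1 : Matrix (Fin M) (Fin M) ℝ)).mulVec cs) ⬝ᵥ h := by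
      rw [Matrix.smul_mulVec, Matrix.one_mulVec, smul_dotProduct, smul_eq_mul]
    rw [t1, t2, ← add_dotProduct]
    have e2 : Gᵀ.mulVec (G.mulVec cs - mhat) + (μ • (1 : Matrix (Fin M) (Fin M) ℝ)).mulVec cs
        = -lam := by
      rw [Matrix.mulVec_sub, Matrix.mulVec_mulVec]
      rw [Matrix.add_mulVec] at hc
      rw [sub_add_eq_add_sub, hc]
      abel
    rw [e2, neg_dotProduct]
  have sq1 : sqNorm (G.mulVec c - mhat)
      = sqNorm (G.mulVec cs - mhat) + 2 * ((G.mulVec cs - mhat) ⬝ᵥ G.mulVec h)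
        + sqNorm (G.mulVec h) := by
    rw [e1, sqNorm_add]
  have sq2 : sqNorm c = sqNorm cs + 2 * (cs ⬝ᵥ h) + sqNorm h := by
    nth_rewrite 1 [hc']
    rw [sqNorm_add]
  rw [sq1, sq2]
  nlinarith [cross]

theorem J2_global_minimizer
    (N M : ℕ) (τ μ : ℝ) (hτ : 0 < τ) (hμ : 0 < μ)
    (ψ : Fin M → ℝ) (mhat : Fin N → ℝ)
    (Γ : ℝ → Matrix (Fin N) (Fin M) ℝ)
    (hΓ : ContinuousOn Γ (Set.Icc 0 τ))
    (Pmat : ℝ → Matrix (Fin M) (Fin M) ℝ)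
    (hPmat : ∀ θ, Pmat θ = (Γ θ)ᵀ * Γ θ + μ • (1 : Matrix (Fin M) (Fin M) ℝ))
    (A : Matrix (Fin M) (Fin M) ℝ)
    (hA : ∀ i j, A i j = ∫ θ in (0:ℝ)..τ, (Pmat θ)⁻¹ i j)
    (hAinv : IsUnit A.det)
    (lam : Fin M → ℝ)
    (B : Matrix (Fin M) (Fin N) ℝ)
    (hB : ∀ i j, B i j = ∫ θ in (0:ℝ)..τ, ((Pmat θ)⁻¹ * (Γ θ)ᵀ) i j)
    (hlam : lam = A⁻¹.mulVec (B.mulVec mhat - ψ))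
    (cstar : ℝ → Fin M → ℝ)
    (hcstar : ∀ θ, cstar θ = (Pmat θ)⁻¹.mulVec ((Γ θ)ᵀ.mulVec mhat - lam)) :
    (∫ θ in (0:ℝ)..τ, cstar θ) = ψ ∧
    ∀ c : ℝ → Fin M → ℝ, ContinuousOn c (Set.Icc 0 τ) →
      (∫ θ in (0:ℝ)..τ, c θ) = ψ →
      J2 τ μ Γ mhat cstar ≤ J2 τ μ Γ mhat c := by
  set s : Set ℝ := Set.Icc 0 τ with hs
  have huIcc : Set.uIcc (0:ℝ) τ = s := Set.uIcc_of_le hτ.le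
  -- Pmat is positive definite, hence invertible
  have hPD : ∀ θ, (Pmat θ).PosDef := by
    intro θ
    rw [hPmat]
    refine Matrix.PosDef.posSemidef_add ?_ ?_
    · have h := Matrix.posSemidef_conjTranspose_mul_self (Γ θ)
      rwa [Matrix.conjTranspose_eq_transpose_of_trivial] at h
    · rw [Matrix.posDef_iff_dotProduct_mulVec]
      constructor
      · simp [Matrix.IsHermitian]
      · intro x hx
        have hxx : 0 < x ⬝ᵥ x := by
          rw [← sqNorm_eq_dot]
          rcases Function.ne_iff.mp hx with ⟨i, hi⟩
          have h1 : (0:ℝ) < (x i)^2 := pow_two_pos_of_ne_zero hi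
          calc (0:ℝ) < (x i)^2 := h1
            _ ≤ sqNorm x := Finset.single_le_sum (fun j _ => sq_nonneg (x j))
                (Finset.mem_univ i)
        have e : star x ⬝ᵥ (μ • (1 : Matrix (Fin M) (Fin M) ℝ)) *ᵥ x = μ * (x ⬝ᵥ x) := by
          rw [Matrix.smul_mulVec, Matrix.one_mulVec]
          simp [dotProduct_smul]
        rw [e]
        positivity
  have hPdet : ∀ θ, IsUnit (Pmat θ).det := fun θ =>
    (Matrix.isUnit_iff_isUnit_det _).mp (hPD θ).isUnit
  -- continuity via restriction to the subtype
  have hΓr : Continuous (s.restrict Γ) := continuousOn_iff_continuous_restrict.mp hΓ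
  have hPr : Continuous (s.restrict Pmat) := by
    have e : s.restrict Pmat
        = fun x : s => ((s.restrict Γ) x)ᵀ * (s.restrict Γ) x
            + μ • (1 : Matrix (Fin M) (Fin M) ℝ) := by
      funext x; exact hPmat x
    rw [e]
    exact (hΓr.matrix_transpose.matrix_mul hΓr).add continuous_const
  have hPinvr : Continuous (s.restrict fun θ => (Pmat θ)⁻¹) := by
    have e : (s.restrict fun θ => (Pmat θ)⁻¹)
        = fun x : s => ((s.restrict Pmat x).det)⁻¹ • (s.restrict Pmat x).adjugate := by
      funext x
      simp only [Set.restrict_apply, Matrix.inv_def, Ring.inverse_eq_inv']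
      rfl
    rw [e]
    exact (hPr.matrix_det.inv₀ fun x => ((hPD x).det_pos.ne')).smul hPr.matrix_adjugate
  have hPinv : ContinuousOn (fun θ => (Pmat θ)⁻¹) s :=
    continuousOn_iff_continuous_restrict.mpr hPinvr
  have hcsr : Continuous (s.restrict cstar) := by
    have e : s.restrict cstar
        = fun x : s => (s.restrict (fun θ => (Pmat θ)⁻¹) x).mulVec
            (((s.restrict Γ x)ᵀ).mulVec mhat - lam) := by
      funext x; exact hcstar x
    rw [e]
    exact hPinvr.matrix_mulVec ((hΓr.matrix_transpose.matrix_mulVec continuous_const).sub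
      continuous_const)
  have hcscont : ContinuousOn cstar s := continuousOn_iff_continuous_restrict.mpr hcsr
  -- generic integrability from continuity on s
  have intOf : ∀ {E : Type} [inst : NormedAddCommGroup E] (f : ℝ → E), ContinuousOn f s →
      IntervalIntegrable f MeasureTheory.volume 0 τ := by
    intro E _ f hf
    exact ContinuousOn.intervalIntegrable (huIcc ▸ hf)
  -- componentwise interval integrals
  have comp_int : ∀ (f : ℝ → Fin M → ℝ), IntervalIntegrable f MeasureTheory.volume 0 τ →
      ∀ i, (∫ θ in (0:ℝ)..τ, f θ) i = ∫ θ in (0:ℝ)..τ, f θ i := by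
    intro f hf i
    exact ((ContinuousLinearMap.proj (R := ℝ) (φ := fun _ : Fin M => ℝ)
      i).intervalIntegral_comp_comm hf).symm
  have hPinvEntry : ∀ i j, ContinuousOn (fun θ => (Pmat θ)⁻¹ i j) s := fun i j =>
    continuousOn_iff_continuous_restrict.mpr
      ((continuous_apply j).comp ((continuous_apply i).comp hPinvr))
  have hPinvGT : ContinuousOn (fun θ => (Pmat θ)⁻¹ * (Γ θ)ᵀ) s :=
    continuousOn_iff_continuous_restrict.mpr (hPinvr.matrix_mul hΓr.matrix_transpose)
  have hPinvGTEntry : ∀ i j, ContinuousOn (fun θ => ((Pmat θ)⁻¹ * (Γ θ)ᵀ) i j) s := fun i j =>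
    continuousOn_iff_continuous_restrict.mpr
      ((continuous_apply j).comp ((continuous_apply i).comp
        (continuousOn_iff_continuous_restrict.mp hPinvGT)))
  have hcs_int : IntervalIntegrable cstar MeasureTheory.volume 0 τ := intOf cstar hcscont
  -- Step 1: feasibility of cstar
  have hvec : B.mulVec mhat - A.mulVec lam = ψ := by
    rw [hlam, Matrix.mulVec_mulVec, Matrix.mul_nonsing_inv A hAinv, Matrix.one_mulVec]
    abel
  have feas : (∫ θ in (0:ℝ)..τ, cstar θ) = ψ := by
    funext i
    rw [comp_int cstar hcs_int i]
    have e : ∀ θ, cstar θ i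
        = (∑ k, ((Pmat θ)⁻¹ * (Γ θ)ᵀ) i k * mhat k) - (∑ j, (Pmat θ)⁻¹ i j * lam j) := by
      intro θ
      rw [hcstar]
      have e2 : (Pmat θ)⁻¹.mulVec ((Γ θ)ᵀ.mulVec mhat - lam)
          = ((Pmat θ)⁻¹ * (Γ θ)ᵀ).mulVec mhat - (Pmat θ)⁻¹.mulVec lam := by
        rw [Matrix.mulVec_sub, Matrix.mulVec_mulVec]
      rw [e2]
      simp [Matrix.mulVec, dotProduct]
    have e' : (∫ θ in (0:ℝ)..τ, cstar θ i)
        = ∫ θ in (0:ℝ)..τ, ((∑ k, ((Pmat θ)⁻¹ * (Γ θ)ᵀ) i k * mhat k)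
            - (∑ j, (Pmat θ)⁻¹ i j * lam j)) := by
      apply intervalIntegral.integral_congr
      intro θ _
      exact e θ
    rw [e']
    have int1 : ∀ k ∈ Finset.univ, IntervalIntegrable
        (fun θ => ((Pmat θ)⁻¹ * (Γ θ)ᵀ) i k * mhat k) MeasureTheory.volume 0 τ :=
      fun k _ => intOf _ ((hPinvGTEntry i k).mul continuousOn_const)
    have int2 : ∀ j ∈ Finset.univ, IntervalIntegrable
        (fun θ => (Pmat θ)⁻¹ i j * lam j) MeasureTheory.volume 0 τ :=
      fun j _ => intOf _ ((hPinvEntry i j).mul continuousOn_const)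
    have intS1 : IntervalIntegrable
        (fun θ => ∑ k, ((Pmat θ)⁻¹ * (Γ θ)ᵀ) i k * mhat k) MeasureTheory.volume 0 τ :=
      intOf _ (continuousOn_finset_sum _ fun k _ => (hPinvGTEntry i k).mul continuousOn_const)
    have intS2 : IntervalIntegrable
        (fun θ => ∑ j, (Pmat θ)⁻¹ i j * lam j) MeasureTheory.volume 0 τ :=
      intOf _ (continuousOn_finset_sum _ fun j _ => (hPinvEntry i j).mul continuousOn_const)
    rw [intervalIntegral.integral_sub intS1 intS2,
      intervalIntegral.integral_finset_sum int1,
      intervalIntegral.integral_finset_sum int2]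
    have e3 : ∀ k, (∫ θ in (0:ℝ)..τ, ((Pmat θ)⁻¹ * (Γ θ)ᵀ) i k * mhat k)
        = B i k * mhat k := by
      intro k
      rw [intervalIntegral.integral_mul_const, hB]
    have e4 : ∀ j, (∫ θ in (0:ℝ)..τ, (Pmat θ)⁻¹ i j * lam j) = A i j * lam j := by
      intro j
      rw [intervalIntegral.integral_mul_const, hA]
    simp_rw [e3, e4]
    have := congrFun hvec i
    simpa [Matrix.mulVec, dotProduct] using this
  refine ⟨feas, ?_⟩
  -- Step 2: optimality
  intro c hccont hcint
  have hcr : Continuous (s.restrict c) := continuousOn_iff_continuous_restrict.mp hccont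
  have hPi : ∀ θ, ((Γ θ)ᵀ * Γ θ + μ • (1 : Matrix (Fin M) (Fin M) ℝ)).mulVec (cstar θ)
      = (Γ θ)ᵀ.mulVec mhat - lam := by
    intro θ
    rw [← hPmat, hcstar, Matrix.mulVec_mulVec, Matrix.mul_nonsing_inv _ (hPdet θ),
      Matrix.one_mulVec]
  have pw : ∀ θ, sqNorm ((Γ θ).mulVec (c θ) - mhat) + μ * sqNorm (c θ)
      = (sqNorm ((Γ θ).mulVec (cstar θ) - mhat) + μ * sqNorm (cstar θ))
        + (sqNorm ((Γ θ).mulVec (c θ - cstar θ)) + μ * sqNorm (c θ - cstar θ))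
        - 2 * (lam ⬝ᵥ (c θ - cstar θ)) :=
    fun θ => pointwise_key (Γ θ) μ mhat lam (cstar θ) (c θ) (hPi θ)
  -- continuity of the various integrands
  have contF : ∀ (u : ℝ → Fin M → ℝ), Continuous (s.restrict u) →
      ContinuousOn (fun θ => sqNorm ((Γ θ).mulVec (u θ) - mhat)) s := by
    intro u hur
    apply continuousOn_iff_continuous_restrict.mpr
    exact continuous_sqNorm.comp ((hΓr.matrix_mulVec hur).sub continuous_const)
  have contG : ∀ (u : ℝ → Fin M → ℝ), Continuous (s.restrict u) →
      ContinuousOn (fun θ => sqNorm (u θ)) s := by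
    intro u hur
    apply continuousOn_iff_continuous_restrict.mpr
    exact continuous_sqNorm.comp hur
  have hhr : Continuous (s.restrict fun θ => c θ - cstar θ) := by
    have e : (s.restrict fun θ => c θ - cstar θ)
        = fun x : s => s.restrict c x - s.restrict cstar x := rfl
    rw [e]; exact hcr.sub hcsr
  have contQ : ContinuousOn
      (fun θ => sqNorm ((Γ θ).mulVec (c θ - cstar θ)) + μ * sqNorm (c θ - cstar θ)) s := by
    apply continuousOn_iff_continuous_restrict.mpr
    exact (continuous_sqNorm.comp (hΓr.matrix_mulVec hhr)).add
      (continuous_const.mul (continuous_sqNorm.comp hhr))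
  have contL : ContinuousOn (fun θ => 2 * (lam ⬝ᵥ (c θ - cstar θ))) s := by
    apply continuousOn_iff_continuous_restrict.mpr
    have e : (s.restrict fun θ => 2 * (lam ⬝ᵥ (c θ - cstar θ)))
        = fun x : s => 2 * ∑ j, lam j * (s.restrict (fun θ => c θ - cstar θ) x j) := by
      funext x; simp [dotProduct]; rfl
    rw [show (s.domRestrict fun θ => 2 * (lam ⬝ᵥ (c θ - cstar θ))) = _ from e]
    exact continuous_const.mul (continuous_finset_sum _ fun j _ =>
      continuous_const.mul ((continuous_apply j).comp hhr))
  -- integrability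
  have intFc := intOf _ (contF c hcr)
  have intGc := intOf _ (contG c hcr)
  have intFcs := intOf _ (contF cstar hcsr)
  have intGcs := intOf _ (contG cstar hcsr)
  have intQ := intOf _ contQ
  have intL := intOf _ contL
  -- the linear term integrates to zero
  have hL0 : (∫ θ in (0:ℝ)..τ, 2 * (lam ⬝ᵥ (c θ - cstar θ))) = 0 := by
    have hint_c : IntervalIntegrable c MeasureTheory.volume 0 τ := intOf c hccont
    have hcj : ∀ j, IntervalIntegrable (fun θ => c θ j) MeasureTheory.volume 0 τ :=
      fun j => intOf _ ((continuous_apply j).comp_continuousOn hccont)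
    have hcsj : ∀ j, IntervalIntegrable (fun θ => cstar θ j) MeasureTheory.volume 0 τ :=
      fun j => intOf _ ((continuous_apply j).comp_continuousOn hcscont)
    have hdiff : ∀ j, (∫ θ in (0:ℝ)..τ, (c θ j - cstar θ j)) = 0 := by
      intro j
      rw [intervalIntegral.integral_sub (hcj j) (hcsj j),
        ← comp_int c hint_c j, ← comp_int cstar hcs_int j, hcint, feas]
      ring
    have e : ∀ θ, 2 * (lam ⬝ᵥ (c θ - cstar θ)) = ∑ j, 2 * (lam j * (c θ j - cstar θ j)) := by
      intro θ
      simp only [dotProduct, Pi.sub_apply]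
      rw [Finset.mul_sum]
    simp_rw [e]
    have intj : ∀ j ∈ Finset.univ, IntervalIntegrable
        (fun θ => 2 * (lam j * (c θ j - cstar θ j))) MeasureTheory.volume 0 τ := by
      intro j _
      exact intOf _ (continuousOn_const.mul (continuousOn_const.mul
        (((continuous_apply j).comp_continuousOn hccont).sub
          ((continuous_apply j).comp_continuousOn hcscont))))
    rw [intervalIntegral.integral_finset_sum intj]
    apply Finset.sum_eq_zero
    intro j _
    rw [intervalIntegral.integral_const_mul, intervalIntegral.integral_const_mul, hdiff j]
    ring
  -- the quadratic remainder is nonnegative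
  have hQ0 : 0 ≤ ∫ θ in (0:ℝ)..τ,
      (sqNorm ((Γ θ).mulVec (c θ - cstar θ)) + μ * sqNorm (c θ - cstar θ)) :=
    intervalIntegral.integral_nonneg hτ.le fun u _ =>
      add_nonneg (sqNorm_nonneg' _) (mul_nonneg hμ.le (sqNorm_nonneg' _))
  -- combine
  have J2eq : ∀ (u : ℝ → Fin M → ℝ),
      IntervalIntegrable (fun θ => sqNorm ((Γ θ).mulVec (u θ) - mhat))
        MeasureTheory.volume 0 τ →
      IntervalIntegrable (fun θ => sqNorm (u θ)) MeasureTheory.volume 0 τ →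
      J2 τ μ Γ mhat u
        = ∫ θ in (0:ℝ)..τ, (sqNorm ((Γ θ).mulVec (u θ) - mhat) + μ * sqNorm (u θ)) := by
    intro u h1 h2
    unfold J2
    rw [← intervalIntegral.integral_const_mul,
      ← intervalIntegral.integral_add h1 (h2.const_mul μ)]
  rw [J2eq c intFc intGc, J2eq cstar intFcs intGcs]
  have intFGcs := intFcs.add (intGcs.const_mul μ)
  have e : (∫ θ in (0:ℝ)..τ, (sqNorm ((Γ θ).mulVec (c θ) - mhat) + μ * sqNorm (c θ)))
      = ((∫ θ in (0:ℝ)..τ,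
          (sqNorm ((Γ θ).mulVec (cstar θ) - mhat) + μ * sqNorm (cstar θ)))
        + (∫ θ in (0:ℝ)..τ,
          (sqNorm ((Γ θ).mulVec (c θ - cstar θ)) + μ * sqNorm (c θ - cstar θ))))
        - (∫ θ in (0:ℝ)..τ, 2 * (lam ⬝ᵥ (c θ - cstar θ))) := by
    rw [← intervalIntegral.integral_add intFGcs intQ,
      ← intervalIntegral.integral_sub (intFGcs.add intQ) intL]
    apply intervalIntegral.integral_congr
    intro θ _
    exact pw θ
  rw [e, hL0]
  linarith [hQ0]
end

section
/- Pointwise optimality characterization: a continuous function c : [0,τ] → ℝ^M with ∫₀^τ c(θ)dθ = ψ minimizes J₂ if and only if there exists λ ∈ ℝ^M such that Γ(θ)ᵀ(Γ(θ)c(θ) − m̂) + μ c(θ) + λ = 0 for all θ ∈ [0, τ]. -/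
open Set Matrix

namespace ELaux

open MeasureTheory

lemma sqNorm_nonneg {k : ℕ} (v : Fin k → ℝ) : 0 ≤ sqNorm v :=
  Finset.sum_nonneg fun _ _ => sq_nonneg _

lemma sqNorm_add {k : ℕ} (u v : Fin k → ℝ) :
    sqNorm (u + v) = sqNorm u + 2 * (u ⬝ᵥ v) + sqNorm v := by
  simp only [sqNorm, dotProduct, Pi.add_apply, Finset.mul_sum]
  rw [← Finset.sum_add_distrib, ← Finset.sum_add_distrib]
  exact Finset.sum_congr rfl fun i _ => by ring

lemma sqNorm_smul {k : ℕ} (t : ℝ) (v : Fin k → ℝ) : sqNorm (t • v) = t ^ 2 * sqNorm v := by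
  simp [sqNorm, Finset.mul_sum, mul_pow]

lemma sqNorm_eq_zero {k : ℕ} {v : Fin k → ℝ} (h : sqNorm v = 0) : v = 0 := by
  funext i
  have h' := (Finset.sum_eq_zero_iff_of_nonneg (fun i _ => sq_nonneg (v i))).mp h i
    (Finset.mem_univ i)
  exact pow_eq_zero_iff (two_ne_zero) |>.mp h'

variable {s : Set ℝ}

lemma contOn_elem {n m : ℕ} {A : ℝ → Matrix (Fin n) (Fin m) ℝ}
    (hA : ContinuousOn A s) (i : Fin n) (j : Fin m) :
    ContinuousOn (fun θ => A θ i j) s := by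
  have hcont : Continuous fun p : Matrix (Fin n) (Fin m) ℝ => p i j :=
    (continuous_apply j).comp (continuous_apply i)
  exact hcont.comp_continuousOn hA

lemma contOn_mulVec {n m : ℕ} {A : ℝ → Matrix (Fin n) (Fin m) ℝ}
    {v : ℝ → Fin m → ℝ} (hA : ContinuousOn A s) (hv : ContinuousOn v s) :
    ContinuousOn (fun θ => (A θ).mulVec (v θ)) s := by
  apply continuousOn_pi.2
  intro i
  simp only [mulVec, dotProduct]
  exact continuousOn_finset_sum _ fun j _ =>
    (contOn_elem hA i j).mul ((continuous_apply j).comp_continuousOn hv)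

lemma contOn_dot {m : ℕ} {u v : ℝ → Fin m → ℝ}
    (hu : ContinuousOn u s) (hv : ContinuousOn v s) :
    ContinuousOn (fun θ => u θ ⬝ᵥ v θ) s := by
  simp only [dotProduct]
  exact continuousOn_finset_sum _ fun j _ =>
    ((continuous_apply j).comp_continuousOn hu).mul ((continuous_apply j).comp_continuousOn hv)

lemma contOn_sqNorm {m : ℕ} {v : ℝ → Fin m → ℝ} (hv : ContinuousOn v s) :
    ContinuousOn (fun θ => sqNorm (v θ)) s := by
  simp only [sqNorm]
  exact continuousOn_finset_sum _ fun j _ =>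
    ((continuous_apply j).comp_continuousOn hv).pow 2

lemma contOn_transpose {n m : ℕ} {A : ℝ → Matrix (Fin n) (Fin m) ℝ}
    (hA : ContinuousOn A s) : ContinuousOn (fun θ => (A θ)ᵀ) s := by
  apply continuousOn_pi.2; intro j; apply continuousOn_pi.2; intro i
  exact contOn_elem hA i j

variable {τ : ℝ}

lemma ii (hτ : 0 ≤ τ) {E : Type*} [NormedAddCommGroup E] {f : ℝ → E}
    (hf : ContinuousOn f (Icc 0 τ)) : IntervalIntegrable f volume 0 τ := by
  apply ContinuousOn.intervalIntegrable
  rwa [uIcc_of_le hτ]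

lemma integral_const_dot {M : ℕ} (hτ : 0 ≤ τ) (a : Fin M → ℝ) {d : ℝ → Fin M → ℝ}
    (hd : ContinuousOn d (Icc 0 τ)) :
    (∫ θ in (0:ℝ)..τ, a ⬝ᵥ d θ) = a ⬝ᵥ (∫ θ in (0:ℝ)..τ, d θ) := by
  have hint : IntervalIntegrable d volume 0 τ := ii hτ hd
  simp only [dotProduct]
  have hsum := intervalIntegral.integral_finset_sum (μ := volume) (a := (0:ℝ)) (b := τ)
    (s := Finset.univ) (f := fun (i : Fin M) (θ : ℝ) => a i * d θ i)
    (fun i _ => ii hτ (continuousOn_const.mul ((continuous_apply i).comp_continuousOn hd)))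
  rw [hsum]
  refine Finset.sum_congr rfl fun i _ => ?_
  rw [intervalIntegral.integral_const_mul]
  congr 1
  have := (ContinuousLinearMap.proj (R := ℝ) (φ := fun _ : Fin M => ℝ)
    i).intervalIntegral_comp_comm hint
  simpa using this

/-- The Euler–Lagrange "gradient" function. -/
def G {N M : ℕ} (μ : ℝ) (Γ : ℝ → Matrix (Fin N) (Fin M) ℝ) (mhat : Fin N → ℝ)
    (c : ℝ → Fin M → ℝ) (θ : ℝ) : Fin M → ℝ :=
  (Γ θ)ᵀ.mulVec ((Γ θ).mulVec (c θ) - mhat) + μ • c θ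

lemma contOn_G {N M : ℕ} {μ : ℝ} {Γ : ℝ → Matrix (Fin N) (Fin M) ℝ} {mhat : Fin N → ℝ}
    {c : ℝ → Fin M → ℝ} (hΓ : ContinuousOn Γ s) (hc : ContinuousOn c s) :
    ContinuousOn (G μ Γ mhat c) s := by
  refine ContinuousOn.add (contOn_mulVec (contOn_transpose hΓ)
    ((contOn_mulVec hΓ hc).sub continuousOn_const)) ?_
  exact hc.const_smul μ

lemma J2_expand {N M : ℕ} {μ : ℝ} (hτ : 0 ≤ τ)
    {Γ : ℝ → Matrix (Fin N) (Fin M) ℝ} (hΓ : ContinuousOn Γ (Icc 0 τ))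
    (mhat : Fin N → ℝ) {c d : ℝ → Fin M → ℝ}
    (hc : ContinuousOn c (Icc 0 τ)) (hd : ContinuousOn d (Icc 0 τ)) :
    J2 τ μ Γ mhat (fun θ => c θ + d θ)
      = J2 τ μ Γ mhat c
        + 2 * (∫ θ in (0:ℝ)..τ, G μ Γ mhat c θ ⬝ᵥ d θ)
        + ((∫ θ in (0:ℝ)..τ, sqNorm ((Γ θ).mulVec (d θ)))
            + μ * ∫ θ in (0:ℝ)..τ, sqNorm (d θ)) := by
  have hΓc : ContinuousOn (fun θ => (Γ θ).mulVec (c θ) - mhat) (Icc 0 τ) :=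
    (contOn_mulVec hΓ hc).sub continuousOn_const
  have hΓd : ContinuousOn (fun θ => (Γ θ).mulVec (d θ)) (Icc 0 τ) :=
    contOn_mulVec hΓ hd
  have hF1 : IntervalIntegrable (fun θ => sqNorm ((Γ θ).mulVec (c θ) - mhat)) volume 0 τ :=
    ii hτ (contOn_sqNorm hΓc)
  have hG1 : IntervalIntegrable
      (fun θ => ((Γ θ).mulVec (c θ) - mhat) ⬝ᵥ (Γ θ).mulVec (d θ)) volume 0 τ :=
    ii hτ (contOn_dot hΓc hΓd)
  have hQ1 : IntervalIntegrable (fun θ => sqNorm ((Γ θ).mulVec (d θ))) volume 0 τ :=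
    ii hτ (contOn_sqNorm hΓd)
  have hF2 : IntervalIntegrable (fun θ => sqNorm (c θ)) volume 0 τ :=
    ii hτ (contOn_sqNorm hc)
  have hG2 : IntervalIntegrable (fun θ => c θ ⬝ᵥ d θ) volume 0 τ :=
    ii hτ (contOn_dot hc hd)
  have hQ2 : IntervalIntegrable (fun θ => sqNorm (d θ)) volume 0 τ :=
    ii hτ (contOn_sqNorm hd)
  have e1 : ∀ θ : ℝ, sqNorm ((Γ θ).mulVec (c θ + d θ) - mhat)
      = sqNorm ((Γ θ).mulVec (c θ) - mhat)
        + 2 * (((Γ θ).mulVec (c θ) - mhat) ⬝ᵥ (Γ θ).mulVec (d θ))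
        + sqNorm ((Γ θ).mulVec (d θ)) := by
    intro θ
    have : (Γ θ).mulVec (c θ + d θ) - mhat
        = ((Γ θ).mulVec (c θ) - mhat) + (Γ θ).mulVec (d θ) := by
      rw [mulVec_add]; abel
    rw [this, sqNorm_add]
  have e2 : ∀ θ : ℝ, sqNorm (c θ + d θ)
      = sqNorm (c θ) + 2 * (c θ ⬝ᵥ d θ) + sqNorm (d θ) := fun θ => sqNorm_add _ _
  have e3 : ∀ θ : ℝ, G μ Γ mhat c θ ⬝ᵥ d θ
      = ((Γ θ).mulVec (c θ) - mhat) ⬝ᵥ (Γ θ).mulVec (d θ) + μ * (c θ ⬝ᵥ d θ) := by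
    intro θ
    rw [G, add_dotProduct, smul_dotProduct, smul_eq_mul]
    congr 1
    rw [Matrix.dotProduct_mulVec, ← Matrix.mulVec_transpose]
  simp only [J2, e1, e2, e3]
  rw [intervalIntegral.integral_add (hF1.add (hG1.const_mul 2)) hQ1,
    intervalIntegral.integral_add hF1 (hG1.const_mul 2),
    intervalIntegral.integral_add (hF2.add (hG2.const_mul 2)) hQ2,
    intervalIntegral.integral_add hF2 (hG2.const_mul 2),
    intervalIntegral.integral_add hG1 (hG2.const_mul μ),
    intervalIntegral.integral_const_mul, intervalIntegral.integral_const_mul,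
    intervalIntegral.integral_const_mul]
  ring

end ELaux

open ELaux MeasureTheory in
theorem J2_euler_lagrange_iff
    (N M : ℕ) (τ μ : ℝ) (hτ : 0 < τ) (hμ : 0 < μ)
    (ψ : Fin M → ℝ) (mhat : Fin N → ℝ)
    (Γ : ℝ → Matrix (Fin N) (Fin M) ℝ)
    (hΓ : ContinuousOn Γ (Set.Icc 0 τ))
    (c : ℝ → Fin M → ℝ)
    (hc : ContinuousOn c (Set.Icc 0 τ))
    (hcψ : (∫ θ in (0:ℝ)..τ, c θ) = ψ) :
    (∀ c' : ℝ → Fin M → ℝ, ContinuousOn c' (Set.Icc 0 τ) →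
        (∫ θ in (0:ℝ)..τ, c' θ) = ψ → J2 τ μ Γ mhat c ≤ J2 τ μ Γ mhat c')
    ↔ ∃ lam : Fin M → ℝ, ∀ θ ∈ Set.Icc (0:ℝ) τ,
        (Γ θ)ᵀ.mulVec ((Γ θ).mulVec (c θ) - mhat) + μ • c θ + lam = 0 := by
  have hτ' : (0:ℝ) ≤ τ := hτ.le
  have hG : ContinuousOn (G μ Γ mhat c) (Icc 0 τ) := contOn_G hΓ hc
  constructor
  · -- minimality → EL
    intro Hmin
    set g : Fin M → ℝ := τ⁻¹ • (∫ θ in (0:ℝ)..τ, G μ Γ mhat c θ) with hg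
    set h : ℝ → Fin M → ℝ := fun θ => G μ Γ mhat c θ - g with hh
    have hhc : ContinuousOn h (Icc 0 τ) := hG.sub continuousOn_const
    have hhint : (∫ θ in (0:ℝ)..τ, h θ) = 0 := by
      rw [hh]
      rw [intervalIntegral.integral_sub (ii hτ' hG) intervalIntegrable_const,
        intervalIntegral.integral_const, sub_zero, hg, smul_smul,
        mul_inv_cancel₀ (ne_of_gt hτ), one_smul, sub_self]
    set A : ℝ := ∫ θ in (0:ℝ)..τ, G μ Γ mhat c θ ⬝ᵥ h θ with hA
    set B1 : ℝ := ∫ θ in (0:ℝ)..τ, sqNorm ((Γ θ).mulVec (h θ)) with hB1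
    set B2 : ℝ := ∫ θ in (0:ℝ)..τ, sqNorm (h θ) with hB2
    have hB1n : 0 ≤ B1 := intervalIntegral.integral_nonneg hτ' fun θ _ => sqNorm_nonneg _
    have hB2n : 0 ≤ B2 := intervalIntegral.integral_nonneg hτ' fun θ _ => sqNorm_nonneg _
    -- second variation inequality for every scaling t
    have key : ∀ t : ℝ, 0 ≤ 2 * (t * A) + (t ^ 2 * B1 + μ * (t ^ 2 * B2)) := by
      intro t
      have hth : ContinuousOn (fun θ => t • h θ) (Icc 0 τ) := hhc.const_smul t
      have hc'c : ContinuousOn (fun θ => c θ + t • h θ) (Icc 0 τ) := hc.add hth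
      have hc'ψ : (∫ θ in (0:ℝ)..τ, c θ + t • h θ) = ψ := by
        rw [intervalIntegral.integral_add (ii hτ' hc) (ii hτ' hth),
          intervalIntegral.integral_smul, hhint, smul_zero, add_zero, hcψ]
      have hle := Hmin _ hc'c hc'ψ
      have hexp := J2_expand (μ := μ) hτ' hΓ mhat hc hth
      have e1 : ∀ θ : ℝ, G μ Γ mhat c θ ⬝ᵥ (t • h θ) = t * (G μ Γ mhat c θ ⬝ᵥ h θ) := by
        intro θ; rw [dotProduct_smul, smul_eq_mul]
      have e2 : ∀ θ : ℝ, sqNorm ((Γ θ).mulVec (t • h θ)) = t ^ 2 * sqNorm ((Γ θ).mulVec (h θ)) := by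
        intro θ; rw [mulVec_smul, sqNorm_smul]
      have e3 : ∀ θ : ℝ, sqNorm (t • h θ) = t ^ 2 * sqNorm (h θ) := fun θ => sqNorm_smul _ _
      simp only [e1, e2, e3, intervalIntegral.integral_const_mul] at hexp
      rw [hexp, ← hA, ← hB1, ← hB2] at hle
      linarith
    -- conclude the linear term vanishes
    have hAzero : A = 0 := by
      set B : ℝ := B1 + μ * B2 with hB
      have hBn : 0 ≤ B := by nlinarith [hμ.le]
      have hkey := key (-A / (B + 1))
      have hBp : (0:ℝ) < B + 1 := by linarith
      have e : 2 * (-A / (B + 1) * A) + ((-A / (B + 1)) ^ 2 * B1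
          + μ * ((-A / (B + 1)) ^ 2 * B2))
          = -(A ^ 2) * (B + 2) / (B + 1) ^ 2 := by
        rw [hB]; field_simp; ring
      rw [e] at hkey
      have hpos : (0:ℝ) < (B + 1) ^ 2 := by positivity
      rcases div_nonneg_iff.mp hkey with ⟨h1, _⟩ | ⟨_, h2⟩
      · nlinarith [sq_nonneg A]
      · nlinarith
    -- A equals the integral of sqNorm h
    have hgid : ∀ θ : ℝ, G μ Γ mhat c θ ⬝ᵥ h θ = sqNorm (h θ) + g ⬝ᵥ h θ := by
      intro θ
      have : G μ Γ mhat c θ = h θ + g := by rw [hh]; simp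
      rw [this, add_dotProduct]
      congr 1
      simp [sqNorm, dotProduct, sq]
    have hAeq : A = ∫ θ in (0:ℝ)..τ, sqNorm (h θ) := by
      rw [hA]
      simp only [hgid]
      rw [intervalIntegral.integral_add (ii hτ' (contOn_sqNorm hhc))
        (ii hτ' (contOn_dot continuousOn_const hhc)),
        integral_const_dot hτ' g hhc, hhint, dotProduct_zero, add_zero]
    have hint0 : (∫ θ in (0:ℝ)..τ, sqNorm (h θ)) = 0 := by rw [← hAeq, hAzero]
    -- a nonneg continuous function with zero integral vanishes
    have hae : (fun θ => sqNorm (h θ)) =ᵐ[MeasureTheory.volume.restrict (Ioc 0 τ)]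
        (fun _ => (0:ℝ)) := by
      have := (intervalIntegral.integral_eq_zero_iff_of_le_of_nonneg_ae hτ'
        (Filter.Eventually.of_forall fun θ => sqNorm_nonneg _)
        (ii hτ' (contOn_sqNorm hhc))).mp hint0
      exact this
    have hae' : (fun θ => sqNorm (h θ)) =ᵐ[MeasureTheory.volume.restrict (Icc 0 τ)]
        (fun _ => (0:ℝ)) := by
      rwa [MeasureTheory.Measure.restrict_congr_set MeasureTheory.Ioc_ae_eq_Icc] at hae
    have heqOn : EqOn (fun θ => sqNorm (h θ)) (fun _ => (0:ℝ)) (Icc 0 τ) :=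
      MeasureTheory.Measure.eqOn_Icc_of_ae_eq MeasureTheory.volume (ne_of_lt hτ) hae'
        (contOn_sqNorm hhc) continuousOn_const
    refine ⟨-g, fun θ hθ => ?_⟩
    have hzero : h θ = 0 := sqNorm_eq_zero (heqOn hθ)
    have : G μ Γ mhat c θ = g := by
      have := hzero
      rw [hh] at this
      simpa [sub_eq_zero] using this
    rw [G] at this
    rw [this]
    simp
  · -- EL → minimality
    intro ⟨lam, hlam⟩ c' hc' hc'ψ
    set d : ℝ → Fin M → ℝ := fun θ => c' θ - c θ with hd
    have hdc : ContinuousOn d (Icc 0 τ) := hc'.sub hc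
    have hdint : (∫ θ in (0:ℝ)..τ, d θ) = 0 := by
      rw [hd]
      rw [intervalIntegral.integral_sub (ii hτ' hc') (ii hτ' hc), hcψ, hc'ψ, sub_self]
    have hexp := J2_expand hτ' hΓ mhat hc hdc (μ := μ) (d := d)
    have hce : (fun θ => c θ + d θ) = c' := by funext θ; simp [hd]
    rw [hce] at hexp
    -- on Icc, G = -lam
    have hGd : ∫ θ in (0:ℝ)..τ, G μ Γ mhat c θ ⬝ᵥ d θ = 0 := by
      have : ∀ θ ∈ uIcc (0:ℝ) τ, G μ Γ mhat c θ ⬝ᵥ d θ = (-lam) ⬝ᵥ d θ := by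
        intro θ hθ
        rw [uIcc_of_le hτ'] at hθ
        have := hlam θ hθ
        have hGθ : G μ Γ mhat c θ = -lam := by
          rw [G]; rw [← sub_eq_zero]; rw [sub_neg_eq_add]; exact this
        rw [hGθ]
      rw [intervalIntegral.integral_congr this, integral_const_dot hτ' _ hdc, hdint,
        dotProduct_zero]
    rw [hexp, hGd]
    have h1 : 0 ≤ ∫ θ in (0:ℝ)..τ, sqNorm ((Γ θ).mulVec (d θ)) :=
      intervalIntegral.integral_nonneg hτ' fun θ _ => sqNorm_nonneg _
    have h2 : 0 ≤ ∫ θ in (0:ℝ)..τ, sqNorm (d θ) :=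
      intervalIntegral.integral_nonneg hτ' fun θ _ => sqNorm_nonneg _
    nlinarith [hμ.le]
end
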